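/- Define the iterated exponential 2^x_n by 2^x_0 = x and 2^x_{n+1} = 2^{(2^x_n)}. Let k ≥ 2 and define t_k(0) = 0, t_k(n+1) = k^{≤ t_k(n)+1} + t_k(n) + 1 where k^{≤m} = ∑_{i=0}^m k^i. Then for all n ≥ 1, t_k(n) ≤ 2^{c_k}_{n-1}, where c_k = (k+3)·log₂ k + log₂ log₂ k + 2. -/

import Mathlib

open Real

/-- The iterated exponential `2^x_n`: a tower of `n` twos topped by `x`. -/
noncomputable def tower (x : ℝ) : ℕ → ℝ
  | 0 => x
  | n + 1 => (2 : ℝ) ^ tower x n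

/-- `t_k(0) = 0`, `t_k(n+1) = k^{≤ t_k(n)+1} + t_k(n) + 1`,
where `k^{≤ m} = ∑_{i=0}^m k^i`. -/
def tk (k : ℕ) : ℕ → ℕ
  | 0 => 0
  | n + 1 => (∑ i ∈ Finset.range (tk k n + 2), k ^ i) + tk k n + 1

lemma tk_geom_le (k m : ℕ) (hk : 2 ≤ k) :
    ∑ i ∈ Finset.range (m + 1), k ^ i ≤ 2 * k ^ m := by
  induction m with
  | zero => simp
  | succ m ih =>
    rw [Finset.sum_range_succ]
    have h2 : 2 * k ^ m ≤ k ^ (m + 1) := by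
      rw [pow_succ]
      calc 2 * k ^ m = k ^ m * 2 := by ring
      _ ≤ k ^ m * k := Nat.mul_le_mul_left _ hk
    omega

lemma tk_succ_le (k n : ℕ) (hk : 2 ≤ k) :
    tk k (n + 1) + 1 ≤ 3 * k ^ (tk k n + 1) := by
  have hS : ∑ i ∈ Finset.range (tk k n + 2), k ^ i ≤ 2 * k ^ (tk k n + 1) :=
    tk_geom_le k (tk k n + 1) hk
  have ht : tk k n + 2 ≤ 2 ^ (tk k n + 1) := Nat.lt_two_pow_self
  have h2k : (2 : ℕ) ^ (tk k n + 1) ≤ k ^ (tk k n + 1) := Nat.pow_le_pow_left hk _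
  show (∑ i ∈ Finset.range (tk k n + 2), k ^ i) + tk k n + 1 + 1 ≤ 3 * k ^ (tk k n + 1)
  omega

/-- For `x ≥ 4`, `x ≤ 2^(x-2)`. -/
lemma self_le_rpow (x : ℝ) (hx : 4 ≤ x) : x ≤ (2 : ℝ) ^ (x - 2) := by
  have h : (2 : ℝ) ^ (x - 2) = 2 ^ (2 : ℝ) * 2 ^ (x - 4) := by
    rw [← Real.rpow_add (by norm_num)]; ring_nf
  have hexp : (2 : ℝ) ^ (x - 4) = Real.exp (Real.log 2 * (x - 4)) := by
    rw [Real.rpow_def_of_pos (by norm_num)]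
  have h1 : Real.log 2 * (x - 4) + 1 ≤ (2 : ℝ) ^ (x - 4) := by
    rw [hexp]; exact Real.add_one_le_exp _
  have hlog : (1 : ℝ) / 2 ≤ Real.log 2 := by
    have := Real.log_two_gt_d9; linarith
  have h22 : (2 : ℝ) ^ (2 : ℝ) = 4 := by
    rw [show (2 : ℝ) = ((2 : ℕ) : ℝ) by norm_num, Real.rpow_natCast]; norm_num
  nlinarith [h1, hlog, hx]

lemma key (k : ℕ) (hk : 2 ≤ k) (n : ℕ) :
    logb 2 k * (tk k (n + 1) + 1) + logb 2 (logb 2 k) + 2 ≤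
      tower ((k + 3 : ℝ) * logb 2 k + logb 2 (logb 2 k) + 2) n := by
  have hk2 : (2 : ℝ) ≤ (k : ℝ) := by exact_mod_cast hk
  set L : ℝ := logb 2 k with hLdef
  set l : ℝ := logb 2 L with hldef
  set c : ℝ := (k + 3 : ℝ) * L + l + 2 with hcdef
  have hL1 : 1 ≤ L := by
    have : logb 2 2 ≤ logb 2 k :=
      Real.logb_le_logb_of_le (by norm_num) (by norm_num) hk2
    rwa [Real.logb_self_eq_one (by norm_num)] at this
  have hl0 : 0 ≤ l := Real.logb_nonneg (by norm_num) hL1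
  have hc7 : 7 ≤ c := by nlinarith
  have hkL : (2 : ℝ) ^ L = (k : ℝ) :=
    Real.rpow_logb (by norm_num) (by norm_num) (by positivity)
  have hLl : (2 : ℝ) ^ l = L :=
    Real.rpow_logb (by norm_num) (by norm_num) (by linarith)
  -- the tower dominates c
  have htow : ∀ m, c ≤ tower c m := by
    intro m
    induction m with
    | zero => exact le_refl _
    | succ m ih =>
      show c ≤ (2 : ℝ) ^ tower c m
      calc c ≤ tower c m := ih
      _ ≤ (2 : ℝ) ^ (tower c m - 2) := self_le_rpow _ (by linarith)
      _ ≤ (2 : ℝ) ^ tower c m :=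
          Real.rpow_le_rpow_of_exponent_le (by norm_num) (by linarith)
  induction n with
  | zero =>
    have h1 : tk k 1 = k + 2 := by
      simp [tk, Finset.sum_range_succ]; omega
    rw [h1]
    show L * (((k + 2 : ℕ) : ℝ) + 1) + l + 2 ≤ c
    push_cast
    have : L * ((k : ℝ) + 2 + 1) = (k + 3 : ℝ) * L := by ring
    rw [this, hcdef]
  | succ n ih =>
    set t : ℕ := tk k (n + 1) with htdef
    set T : ℝ := tower c n with hTdef
    have hT : c ≤ T := htow n
    have hT4 : 4 ≤ T := by linarith
    show L * ((tk k (n + 2) : ℝ) + 1) + l + 2 ≤ (2 : ℝ) ^ T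
    have hnat : (tk k (n + 2) : ℝ) + 1 ≤ 3 * (k : ℝ) ^ (t + 1 : ℕ) := by
      have := tk_succ_le k (n + 1) hk
      push_cast at this ⊢
      exact_mod_cast this
    have hpow : (k : ℝ) ^ (t + 1 : ℕ) = (2 : ℝ) ^ (L * ((t : ℝ) + 1)) := by
      rw [← hkL, ← Real.rpow_natCast ((2:ℝ) ^ L) (t + 1), ← Real.rpow_mul (by norm_num)]
      push_cast
      ring
    have hexp_le : l + L * ((t : ℝ) + 1) ≤ T - 2 := by linarith [ih]
    have hmain : L * ((tk k (n + 2) : ℝ) + 1) ≤ 3 * (2 : ℝ) ^ (T - 2) := by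
      have h0 : (0 : ℝ) ≤ (tk k (n + 2) : ℝ) + 1 := by positivity
      calc L * ((tk k (n + 2) : ℝ) + 1)
          ≤ L * (3 * (k : ℝ) ^ (t + 1 : ℕ)) := by
            apply mul_le_mul_of_nonneg_left hnat (by linarith)
        _ = 3 * ((2 : ℝ) ^ l * (2 : ℝ) ^ (L * ((t : ℝ) + 1))) := by
            rw [hpow, hLl]; ring
        _ = 3 * (2 : ℝ) ^ (l + L * ((t : ℝ) + 1)) := by
            rw [← Real.rpow_add (by norm_num)]
        _ ≤ 3 * (2 : ℝ) ^ (T - 2) := by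
            have := Real.rpow_le_rpow_of_exponent_le (x := 2) (by norm_num) hexp_le
            linarith
    have hl2 : l + 2 ≤ T := by
      have hLt : 0 ≤ L * ((t : ℝ) + 1) := by positivity
      linarith [ih]
    have hTle : T ≤ (2 : ℝ) ^ (T - 2) := self_le_rpow T hT4
    have hsplit : (2 : ℝ) ^ T = 4 * (2 : ℝ) ^ (T - 2) := by
      rw [show T = (T - 2) + 2 by ring, Real.rpow_add (by norm_num)]
      rw [show ((2:ℝ) ^ (2:ℝ)) = 4 by
        rw [show (2 : ℝ) = ((2 : ℕ) : ℝ) from by norm_num, Real.rpow_natCast]; norm_num]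
      ring
    linarith

/-- For `k ≥ 2` and `n ≥ 1`, `t_k(n) ≤ 2^{c_k}_{n-1}`, where
`c_k = (k+3)·log₂ k + log₂ log₂ k + 2`. -/
theorem tk_le_tower (k : ℕ) (hk : 2 ≤ k) (n : ℕ) (hn : 1 ≤ n) :
    (tk k n : ℝ) ≤
      tower ((k + 3 : ℝ) * logb 2 k + logb 2 (logb 2 k) + 2) (n - 1) := by
  obtain ⟨m, rfl⟩ : ∃ m, n = m + 1 := ⟨n - 1, (Nat.succ_pred_eq_of_pos hn).symm⟩
  have hkey := key k hk m
  have hk2 : (2 : ℝ) ≤ (k : ℝ) := by exact_mod_cast hk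
  have hL1 : 1 ≤ logb 2 k := by
    have : logb 2 2 ≤ logb 2 k :=
      Real.logb_le_logb_of_le (by norm_num) (by norm_num) hk2
    rwa [Real.logb_self_eq_one (by norm_num)] at this
  have hl0 : 0 ≤ logb 2 (logb 2 k) := Real.logb_nonneg (by norm_num) hL1
  have ht0 : (0 : ℝ) ≤ (tk k (m + 1) : ℝ) := by positivity
  simp only [Nat.add_sub_cancel]
  nlinarith [hkey, hL1, hl0, ht0]
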